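/- Let (X,ρ) and (X',ρ') be separable metric spaces, q ∈ ℝ, μ a Borel probability measure on X, ν a Borel probability measure on X', and ξ, ξ' premeasures on X and X' respectively. Then for any E ⊆ X and E' ⊆ X', with the convention ∞·0 = 0·∞ = 0, the inequality W^{q,ξ₀}_{μ×ν}(E×E') ≥ W^{q,ξ}_μ(E) · W^{q,ξ'}_ν(E') holds (no covering hypothesis on X or X' is required). -/

import Mathlib

open Metric MeasureTheory Set Filter TopologicalSpace
open scoped ENNReal NNReal Classical

noncomputable section

/-- `x ^ q` for extended nonnegative reals, with the paper's convention
`0 ^ q = ∞` for `q ≤ 0`. -/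
def epow (x : ℝ≥0∞) (q : ℝ) : ℝ≥0∞ := if x = 0 ∧ q ≤ 0 then ∞ else x ^ q

variable {X X' : Type*}

section Defs

variable [MetricSpace X] [MetricSpace X']

/-- A premeasure on a metric space: an increasing `[0,∞]`-valued function on the family of
closed balls, vanishing on the empty set. -/
def IsPremeasure (ξ : Set X → ℝ≥0∞) : Prop :=
  ξ ∅ = 0 ∧ ∀ (x : X) (r : ℝ) (x' : X) (r' : ℝ),
    closedBall x r ⊆ closedBall x' r' → ξ (closedBall x r) ≤ ξ (closedBall x' r')

/-- The doubling ("blanketed") condition defining the class `Φ_D` of premeasures: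
`ξ(B(x,2r)) ≤ K ξ(B(x,r))` for some constant `K > 1`, all `x` and all `0 < r ≤ 1`. -/
def PremeasureBlanketed (ξ : Set X → ℝ≥0∞) : Prop :=
  ∃ K : ℝ≥0, 1 < K ∧ ∀ (x : X) (r : ℝ), 0 < r → r ≤ 1 →
    ξ (closedBall x (2 * r)) ≤ (K : ℝ≥0∞) * ξ (closedBall x r)

variable [MeasurableSpace X] [MeasurableSpace X']

/-- The support of a Borel measure on a metric space. -/
def measSupport (μ : Measure X) : Set X := {x : X | ∀ r : ℝ, 0 < r → 0 < μ (ball x r)}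

/-- A blanketed (doubling) measure: for some `a > 1`,
`limsup_{r → 0⁺} sup_{x ∈ supp μ} μ(B(x,ar)) / μ(B(x,r)) < ∞`. -/
def MeasureBlanketed (μ : Measure X) : Prop :=
  ∃ a : ℝ, 1 < a ∧
    limsup (fun r : ℝ => ⨆ x ∈ measSupport μ,
      μ (closedBall x (a * r)) / μ (closedBall x r)) (nhdsWithin 0 (Ioi 0)) < ∞

/-- The quantity `μ(B)^q ξ(B)` attached to a ball `B`. -/
def ballWeight (μ : Measure X) (q : ℝ) (ξ : Set X → ℝ≥0∞) (B : Set X) : ℝ≥0∞ :=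
  epow (μ B) q * ξ B

/-- A centered `δ`-cover of `E`: countably many closed balls centered in `E`, of diameters
at most `2δ`, covering `E`. -/
def IsCenteredCover (E : Set X) (δ : ℝ) (c : ℕ → X) (r : ℕ → ℝ) : Prop :=
  (∀ i, c i ∈ E) ∧ (∀ i, diam (closedBall (c i) (r i)) ≤ 2 * δ) ∧
    E ⊆ ⋃ i, closedBall (c i) (r i)

/-- The pre-Hausdorff quantity `H^{q,ξ}_{μ,δ}(E)`. -/
def Hd (μ : Measure X) (q : ℝ) (ξ : Set X → ℝ≥0∞) (δ : ℝ) (E : Set X) : ℝ≥0∞ :=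
  if E = ∅ then 0 else
    ⨅ (c : ℕ → X) (r : ℕ → ℝ) (_ : IsCenteredCover E δ c r),
      ∑' i, ballWeight μ q ξ (closedBall (c i) (r i))

/-- `H^{q,ξ}_{μ,0}(E) = sup_{δ > 0} H^{q,ξ}_{μ,δ}(E)`. -/
def H0 (μ : Measure X) (q : ℝ) (ξ : Set X → ℝ≥0∞) (E : Set X) : ℝ≥0∞ :=
  ⨆ (δ : ℝ) (_ : 0 < δ), Hd μ q ξ δ E

/-- The generalized Hausdorff measure `H^{q,ξ}_μ(E) = sup_{F ⊆ E} H^{q,ξ}_{μ,0}(F)`. -/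
def HM (μ : Measure X) (q : ℝ) (ξ : Set X → ℝ≥0∞) (E : Set X) : ℝ≥0∞ :=
  ⨆ (F : Set X) (_ : F ⊆ E), H0 μ q ξ F

/-- A weighted and centered `δ`-cover of `E`: countably many pairs `(w i, B i)` of nonnegative
weights and closed balls centered in `E` of diameters at most `2δ`, with
`Σ {w i : x ∈ B i} ≥ 1` for every `x ∈ E`. -/
def IsWeightedCover (E : Set X) (δ : ℝ) (w : ℕ → ℝ≥0) (c : ℕ → X) (r : ℕ → ℝ) : Prop :=
  (∀ i, c i ∈ E) ∧ (∀ i, diam (closedBall (c i) (r i)) ≤ 2 * δ) ∧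
    ∀ x ∈ E, 1 ≤ ∑' i, (if x ∈ closedBall (c i) (r i) then (w i : ℝ≥0∞) else 0)

/-- The pre-weighted-Hausdorff quantity `W^{q,ξ}_{μ,δ}(E)`. -/
def Wd (μ : Measure X) (q : ℝ) (ξ : Set X → ℝ≥0∞) (δ : ℝ) (E : Set X) : ℝ≥0∞ :=
  if E = ∅ then 0 else
    ⨅ (w : ℕ → ℝ≥0) (c : ℕ → X) (r : ℕ → ℝ) (_ : IsWeightedCover E δ w c r),
      ∑' i, (w i : ℝ≥0∞) * ballWeight μ q ξ (closedBall (c i) (r i))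

/-- `W^{q,ξ}_{μ,0}(E) = sup_{δ > 0} W^{q,ξ}_{μ,δ}(E)`. -/
def W0 (μ : Measure X) (q : ℝ) (ξ : Set X → ℝ≥0∞) (E : Set X) : ℝ≥0∞ :=
  ⨆ (δ : ℝ) (_ : 0 < δ), Wd μ q ξ δ E

/-- The weighted generalized Hausdorff measure `W^{q,ξ}_μ(E) = sup_{F ⊆ E} W^{q,ξ}_{μ,0}(F)`. -/
def WM (μ : Measure X) (q : ℝ) (ξ : Set X → ℝ≥0∞) (E : Set X) : ℝ≥0∞ :=
  ⨆ (F : Set X) (_ : F ⊆ E), W0 μ q ξ F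

/-- Hypothesis (H) for `(X, ξ, μ)`: for every `ε > 0`, `X` can be covered by countably many
closed balls of diameters `< ε` on which `μ(B)^q ξ(B)` is finite. -/
def HypH (μ : Measure X) (q : ℝ) (ξ : Set X → ℝ≥0∞) : Prop :=
  ∀ ε : ℝ, 0 < ε → ∃ (c : ℕ → X) (r : ℕ → ℝ),
    (univ : Set X) ⊆ (⋃ i, closedBall (c i) (r i)) ∧
    (∀ i, diam (closedBall (c i) (r i)) < ε) ∧
    ∀ i, ballWeight μ q ξ (closedBall (c i) (r i)) < ∞

/-- The product premeasure `ξ₀(B × B') = ξ(B) ξ'(B')` on the product space (whose closed balls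
are exactly the products `B(x,r) × B(x',r)`), with the convention `0 ⬝ ∞ = ∞ ⬝ 0 = 0`. -/
def prodPre (ξ : Set X → ℝ≥0∞) (ξ' : Set X' → ℝ≥0∞) : Set (X × X') → ℝ≥0∞ :=
  fun S => ξ (Prod.fst '' S) * ξ' (Prod.snd '' S)

/-- Two sets are (positively) separated: `inf {ρ(x,y) : x ∈ E, y ∈ F} > 0`. -/
def SepSets (E F : Set X) : Prop := 0 < ⨅ x ∈ E, ⨅ y ∈ F, edist x y

/-- The upper `(q,ξ)`-density of `ν` at `x` with respect to `μ`:
`limsup_{r → 0⁺} ν(B(x,r)) / (μ(B(x,r))^q ξ(B(x,r)))`. -/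
def upperDensity (μ : Measure X) (q : ℝ) (ξ : Set X → ℝ≥0∞) (x : X) (ν : Measure X) : ℝ≥0∞ :=
  limsup (fun r : ℝ => ν (closedBall x r) / ballWeight μ q ξ (closedBall x r))
    (nhdsWithin 0 (Ioi 0))

/-- A Hausdorff function: right continuous, monotone increasing `h : [0,∞] → [0,∞]` with
`h(0) = 0` and `h(r) > 0` for `r > 0`. -/
def IsHausdorffFunction (h : ℝ≥0∞ → ℝ≥0∞) : Prop :=
  Monotone h ∧ h 0 = 0 ∧ (∀ r : ℝ≥0∞, 0 < r → 0 < h r) ∧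
    ∀ r : ℝ≥0∞, ContinuousWithinAt h (Ici r) r

/-- The premeasure `ξ_h` induced by a Hausdorff function: `ξ_h(B) = h(diam B)` for `B ≠ ∅`,
`ξ_h(∅) = 0`. -/
def hausPre (h : ℝ≥0∞ → ℝ≥0∞) : Set X → ℝ≥0∞ :=
  fun B => if B = ∅ then 0 else h (EMetric.diam B)

end Defs

lemma epow_mul_of_ne_top {a b : ℝ≥0∞} (ha : a ≠ ∞) (hb : b ≠ ∞) (q : ℝ) :
    epow (a * b) q = epow a q * epow b q := by
  unfold epow
  rcases le_or_gt q 0 with hq | hq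
  · rcases eq_or_ne a 0 with rfl | ha0 <;> rcases eq_or_ne b 0 with rfl | hb0
    · simp [hq]
    · simp only [zero_mul, eq_self_iff_true, true_and, if_pos hq, hb0, false_and, if_false]
      rw [eq_comm, ENNReal.top_mul (ENNReal.rpow_pos (zero_lt_iff.mpr hb0) hb).ne']
    · simp only [mul_zero, eq_self_iff_true, true_and, if_pos hq, ha0, false_and, if_false]
      rw [eq_comm, ENNReal.mul_top (ENNReal.rpow_pos (zero_lt_iff.mpr ha0) ha).ne']
    · have hab : a * b ≠ 0 := mul_ne_zero ha0 hb0
      simp only [hab, ha0, hb0, false_and, if_false]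
      exact ENNReal.mul_rpow_of_ne_top ha hb q
  · simp only [hq.not_ge, and_false, if_false]
    exact ENNReal.mul_rpow_of_nonneg a b hq.le

lemma diam_fst_le' {Y Y' : Type*} [MetricSpace Y] [MetricSpace Y'] {a : Y} {b : Y'} {r δ : ℝ}
    (hδ : 0 < δ) (h : diam (closedBall (a, b) r) ≤ 2 * δ) : diam (closedBall a r) ≤ 2 * δ := by
  rcases lt_or_ge r 0 with hr | hr
  · rw [closedBall_eq_empty.mpr hr, diam_empty]; linarith
  · refine diam_le_of_forall_dist_le (by linarith) fun x hx y hy => ?_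
    have hx' : (x, b) ∈ closedBall (a, b) r := by
      rw [← closedBall_prod_same]; exact ⟨hx, mem_closedBall_self hr⟩
    have hy' : (y, b) ∈ closedBall (a, b) r := by
      rw [← closedBall_prod_same]; exact ⟨hy, mem_closedBall_self hr⟩
    calc dist x y ≤ dist (x, b) (y, b) := by rw [Prod.dist_eq]; exact le_max_left _ _
      _ ≤ diam (closedBall (a, b) r) := dist_le_diam_of_mem isBounded_closedBall hx' hy'
      _ ≤ 2 * δ := h

lemma diam_snd_le' {Y Y' : Type*} [MetricSpace Y] [MetricSpace Y'] {a : Y} {b : Y'} {r δ : ℝ}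
    (hδ : 0 < δ) (h : diam (closedBall (a, b) r) ≤ 2 * δ) : diam (closedBall b r) ≤ 2 * δ := by
  rcases lt_or_ge r 0 with hr | hr
  · rw [closedBall_eq_empty.mpr hr, diam_empty]; linarith
  · refine diam_le_of_forall_dist_le (by linarith) fun x hx y hy => ?_
    have hx' : (a, x) ∈ closedBall (a, b) r := by
      rw [← closedBall_prod_same]; exact ⟨mem_closedBall_self hr, hx⟩
    have hy' : (a, y) ∈ closedBall (a, b) r := by
      rw [← closedBall_prod_same]; exact ⟨mem_closedBall_self hr, hy⟩
    calc dist x y ≤ dist (a, x) (a, y) := by rw [Prod.dist_eq]; exact le_max_right _ _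
      _ ≤ diam (closedBall (a, b) r) := dist_le_diam_of_mem isBounded_closedBall hx' hy'
      _ ≤ 2 * δ := h

section Aux

variable [MetricSpace X] [MetricSpace X'] [MeasurableSpace X] [MeasurableSpace X']

lemma ballWeight_prod (μ : Measure X) [IsProbabilityMeasure μ]
    (ν : Measure X') [IsProbabilityMeasure ν] [SFinite ν]
    (q : ℝ) (ξ : Set X → ℝ≥0∞) (ξ' : Set X' → ℝ≥0∞)
    (hξ : IsPremeasure ξ) (hξ' : IsPremeasure ξ') (a : X) (b : X') (r : ℝ) :
    ballWeight (μ.prod ν) q (prodPre ξ ξ') (closedBall (a, b) r)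
      = ballWeight μ q ξ (closedBall a r) * ballWeight ν q ξ' (closedBall b r) := by
  rcases lt_or_ge r 0 with hr | hr
  · rw [closedBall_eq_empty.mpr (hr : r < 0), closedBall_eq_empty.mpr hr,
      closedBall_eq_empty.mpr hr]
    simp [ballWeight, prodPre, hξ.1, hξ'.1]
  · have hne : (closedBall b r).Nonempty := nonempty_closedBall.mpr hr
    have hne' : (closedBall a r).Nonempty := nonempty_closedBall.mpr hr
    rw [ballWeight, ← closedBall_prod_same, prodPre,
      Set.fst_image_prod _ hne, Set.snd_image_prod hne' _,
      Measure.prod_prod, epow_mul_of_ne_top (measure_ne_top μ _) (measure_ne_top ν _),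
      ballWeight, ballWeight]
    ring

lemma Wd_le_of_cover {μ : Measure X} {q : ℝ} {ξ : Set X → ℝ≥0∞} {δ : ℝ} {E : Set X}
    (hE : E.Nonempty) {w : ℕ → ℝ≥0} {c : ℕ → X} {r : ℕ → ℝ}
    (hcov : IsWeightedCover E δ w c r) :
    Wd μ q ξ δ E ≤ ∑' i, (w i : ℝ≥0∞) * ballWeight μ q ξ (closedBall (c i) (r i)) := by
  rw [Wd, if_neg hE.ne_empty]
  exact iInf_le_of_le w (iInf_le_of_le c (iInf_le_of_le r (iInf_le _ hcov)))

lemma Wd_anti {μ : Measure X} {q : ℝ} {ξ : Set X → ℝ≥0∞} {δ δ' : ℝ} {E : Set X}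
    (h : δ ≤ δ') : Wd μ q ξ δ' E ≤ Wd μ q ξ δ E := by
  rw [Wd, Wd]
  split
  · exact le_rfl
  · refine le_iInf fun w => le_iInf fun c => le_iInf fun r => le_iInf fun hcov => ?_
    exact iInf_le_of_le w (iInf_le_of_le c (iInf_le_of_le r (iInf_le _
      ⟨hcov.1, fun i => (hcov.2.1 i).trans (by linarith), hcov.2.2⟩)))

lemma Wd_prod_ge (q : ℝ) (μ : Measure X) [IsProbabilityMeasure μ]
    (ν : Measure X') [IsProbabilityMeasure ν]
    (ξ : Set X → ℝ≥0∞) (ξ' : Set X' → ℝ≥0∞)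
    (hξ : IsPremeasure ξ) (hξ' : IsPremeasure ξ')
    {δ : ℝ} (hδ : 0 < δ) (F : Set X) (F' : Set X') :
    Wd μ q ξ δ F * Wd ν q ξ' δ F' ≤ Wd (μ.prod ν) q (prodPre ξ ξ') δ (F ×ˢ F') := by
  rcases eq_or_ne F ∅ with rfl | hF
  · simp [Wd]
  rcases eq_or_ne F' ∅ with rfl | hF'
  · simp [Wd]
  have hFne : F.Nonempty := nonempty_iff_ne_empty.mpr hF
  have hF'ne : F'.Nonempty := nonempty_iff_ne_empty.mpr hF'
  conv_rhs => rw [Wd, if_neg (hFne.prod hF'ne).ne_empty]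
  refine le_iInf fun w => le_iInf fun c => le_iInf fun r => le_iInf fun hcov => ?_
  obtain ⟨hc, hd, hcov1⟩ := hcov
  have hsum : ∑' i, (w i : ℝ≥0∞) * ballWeight (μ.prod ν) q (prodPre ξ ξ') (closedBall (c i) (r i))
      = ∑' i, (w i : ℝ≥0∞) *
        (ballWeight μ q ξ (closedBall (c i).1 (r i)) *
          ballWeight ν q ξ' (closedBall (c i).2 (r i))) := by
    refine tsum_congr fun i => ?_
    have h1 := ballWeight_prod μ ν q ξ ξ' hξ hξ' (c i).1 (c i).2 (r i)
    rw [Prod.mk.eta] at h1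
    rw [h1]
  refine le_trans ?_ (le_of_eq hsum.symm)
  have hmem : ∀ (i : ℕ) (x : X) (y : X'), (x, y) ∈ closedBall (c i) (r i) ↔
      x ∈ closedBall (c i).1 (r i) ∧ y ∈ closedBall (c i).2 (r i) := by
    intro i x y
    rw [← Prod.mk.eta (p := c i), ← closedBall_prod_same]
    exact Set.mem_prod
  -- Step A
  have hA : ∀ x ∈ F, Wd ν q ξ' δ F' ≤ ∑' i,
      (if x ∈ closedBall (c i).1 (r i) then
        (w i : ℝ≥0∞) * ballWeight ν q ξ' (closedBall (c i).2 (r i)) else 0) := by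
    intro x hx
    have hcov' : IsWeightedCover F' δ (fun i => if x ∈ closedBall (c i).1 (r i) then w i else 0)
        (fun i => (c i).2) r := by
      refine ⟨fun i => (Set.mem_prod.mp (hc i)).2,
        fun i => diam_snd_le' hδ (by rw [Prod.mk.eta]; exact hd i), ?_⟩
      intro y hy
      refine le_trans (hcov1 (x, y) ⟨hx, hy⟩) (le_of_eq (tsum_congr fun i => ?_))
      by_cases hxB : x ∈ closedBall (c i).1 (r i) <;>
        by_cases hyB : y ∈ closedBall (c i).2 (r i) <;>
        simp [hxB, hyB, hmem i x y]
    refine le_trans (Wd_le_of_cover hF'ne hcov') (le_of_eq (tsum_congr fun i => ?_))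
    by_cases hxB : x ∈ closedBall (c i).1 (r i) <;> simp [hxB]
  -- key step
  have key : ∀ t : ℝ≥0, 0 < t → (t : ℝ≥0∞) ≤ Wd ν q ξ' δ F' →
      Wd μ q ξ δ F * t ≤ ∑' i, (w i : ℝ≥0∞) *
        (ballWeight μ q ξ (closedBall (c i).1 (r i)) *
          ballWeight ν q ξ' (closedBall (c i).2 (r i))) := by
    intro t ht htV
    by_cases hS : ∃ i, w i ≠ 0 ∧ ballWeight ν q ξ' (closedBall (c i).2 (r i)) = ∞ ∧
        ballWeight μ q ξ (closedBall (c i).1 (r i)) ≠ 0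
    · obtain ⟨i, hwi, hQi, hPi⟩ := hS
      have hterm : (w i : ℝ≥0∞) * (ballWeight μ q ξ (closedBall (c i).1 (r i)) *
          ballWeight ν q ξ' (closedBall (c i).2 (r i))) = ∞ := by
        rw [hQi, ENNReal.mul_top hPi, ENNReal.mul_top (ENNReal.coe_ne_zero.mpr hwi)]
      have hStop : (∑' i, (w i : ℝ≥0∞) *
          (ballWeight μ q ξ (closedBall (c i).1 (r i)) *
            ballWeight ν q ξ' (closedBall (c i).2 (r i)))) = ∞ :=
        eq_top_iff.mpr (hterm ▸ ENNReal.le_tsum i)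
      rw [hStop]; exact le_top
    · push_neg at hS
      set v : ℕ → ℝ≥0 := fun i => if w i = 0 then 0 else
        if ballWeight ν q ξ' (closedBall (c i).2 (r i)) = ∞ then 1 else
          w i * (ballWeight ν q ξ' (closedBall (c i).2 (r i))).toNNReal / t with hv
      have hvcoe : ∀ i, w i ≠ 0 → ballWeight ν q ξ' (closedBall (c i).2 (r i)) ≠ ∞ →
          (v i : ℝ≥0∞) = (w i : ℝ≥0∞) * ballWeight ν q ξ' (closedBall (c i).2 (r i)) *
            (t : ℝ≥0∞)⁻¹ := by
        intro i hwi hQfin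
        rw [hv]
        simp only [if_neg hwi, if_neg hQfin]
        rw [ENNReal.coe_div ht.ne', ENNReal.coe_mul, ENNReal.coe_toNNReal hQfin,
          div_eq_mul_inv]
      have hvcov : IsWeightedCover F δ v (fun i => (c i).1) r := by
        refine ⟨fun i => (Set.mem_prod.mp (hc i)).1,
          fun i => diam_fst_le' hδ (by rw [Prod.mk.eta]; exact hd i), ?_⟩
        intro x hx
        by_cases hcase : ∃ i, x ∈ closedBall (c i).1 (r i) ∧ w i ≠ 0 ∧
            ballWeight ν q ξ' (closedBall (c i).2 (r i)) = ∞
        · obtain ⟨i, hxB, hwi, hQi⟩ := hcase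
          have h1 : (1 : ℝ≥0∞) = (if x ∈ closedBall (c i).1 (r i) then (v i : ℝ≥0∞) else 0) := by
            simp [hv, hxB, hwi, hQi]
          exact h1.le.trans (ENNReal.le_tsum i)
        · push_neg at hcase
          have h2 : ∀ i, (if x ∈ closedBall (c i).1 (r i) then
                (w i : ℝ≥0∞) * ballWeight ν q ξ' (closedBall (c i).2 (r i)) else 0) *
                  (t : ℝ≥0∞)⁻¹
              ≤ (if x ∈ closedBall (c i).1 (r i) then (v i : ℝ≥0∞) else 0) := by
            intro i
            by_cases hxB : x ∈ closedBall (c i).1 (r i)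
            · simp only [if_pos hxB]
              by_cases hwi : w i = 0
              · simp [hwi]
              · rw [hvcoe i hwi (hcase i hxB hwi)]
            · simp [hxB]
          calc (1 : ℝ≥0∞) = (t : ℝ≥0∞) * (t : ℝ≥0∞)⁻¹ :=
                (ENNReal.mul_inv_cancel (by exact_mod_cast ht.ne') ENNReal.coe_ne_top).symm
            _ ≤ (∑' i, if x ∈ closedBall (c i).1 (r i) then
                  (w i : ℝ≥0∞) * ballWeight ν q ξ' (closedBall (c i).2 (r i)) else 0) *
                  (t : ℝ≥0∞)⁻¹ :=
                mul_le_mul_left (htV.trans (hA x hx)) _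
            _ = ∑' i, (if x ∈ closedBall (c i).1 (r i) then
                  (w i : ℝ≥0∞) * ballWeight ν q ξ' (closedBall (c i).2 (r i)) else 0) *
                  (t : ℝ≥0∞)⁻¹ := ENNReal.tsum_mul_right.symm
            _ ≤ _ := ENNReal.tsum_le_tsum h2
      have hU : Wd μ q ξ δ F ≤ ∑' i, (v i : ℝ≥0∞) *
          ballWeight μ q ξ (closedBall (c i).1 (r i)) := Wd_le_of_cover hFne hvcov
      have hUS : ∑' i, (v i : ℝ≥0∞) * ballWeight μ q ξ (closedBall (c i).1 (r i))
          ≤ (∑' i, (w i : ℝ≥0∞) * (ballWeight μ q ξ (closedBall (c i).1 (r i)) *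
              ballWeight ν q ξ' (closedBall (c i).2 (r i)))) * (t : ℝ≥0∞)⁻¹ := by
        rw [← ENNReal.tsum_mul_right]
        refine ENNReal.tsum_le_tsum fun i => ?_
        by_cases hwi : w i = 0
        · simp [hv, hwi]
        · by_cases hQi : ballWeight ν q ξ' (closedBall (c i).2 (r i)) = ∞
          · rw [hS i hwi hQi, mul_zero]
            exact zero_le
          · rw [hvcoe i hwi hQi]
            exact le_of_eq (by ring)
      have h3 := (hU.trans hUS)
      calc Wd μ q ξ δ F * (t : ℝ≥0∞)
          ≤ (∑' i, (w i : ℝ≥0∞) * (ballWeight μ q ξ (closedBall (c i).1 (r i)) *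
              ballWeight ν q ξ' (closedBall (c i).2 (r i)))) * (t : ℝ≥0∞)⁻¹ * (t : ℝ≥0∞) :=
            mul_le_mul_left h3 _
        _ = _ := by
            rw [mul_assoc, ENNReal.inv_mul_cancel (by exact_mod_cast ht.ne') ENNReal.coe_ne_top,
              mul_one]
  -- conclude
  rcases eq_or_ne (Wd ν q ξ' δ F') 0 with hV0 | hV0
  · rw [hV0, mul_zero]; exact zero_le
  rcases eq_or_ne (Wd ν q ξ' δ F') ∞ with hVt | hVt
  · rcases eq_or_ne (Wd μ q ξ δ F) 0 with hU0 | hU0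
    · rw [hU0, zero_mul]; exact zero_le
    · have hStop : (∑' i, (w i : ℝ≥0∞) * (ballWeight μ q ξ (closedBall (c i).1 (r i)) *
          ballWeight ν q ξ' (closedBall (c i).2 (r i)))) = ∞ := by
        rw [← top_le_iff]
        refine ENNReal.le_of_forall_nnreal_lt fun s hs => ?_
        obtain ⟨u, hu0, huU⟩ : ∃ u : ℝ≥0, 0 < u ∧ (u : ℝ≥0∞) ≤ Wd μ q ξ δ F := by
          rcases eq_or_ne (Wd μ q ξ δ F) ∞ with h | h
          · exact ⟨1, one_pos, by rw [h]; exact le_top⟩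
          · exact ⟨(Wd μ q ξ δ F).toNNReal, ENNReal.toNNReal_pos hU0 h,
              by rw [ENNReal.coe_toNNReal h]⟩
        have key' := key (s / u + 1) (by positivity) (by rw [hVt]; exact le_top)
        calc (s : ℝ≥0∞) ≤ (u : ℝ≥0∞) * ((s / u + 1 : ℝ≥0) : ℝ≥0∞) := by
              have hus : u * (s / u) = s := by field_simp
              rw [← ENNReal.coe_mul, ENNReal.coe_le_coe, mul_add, mul_one, hus]
              exact le_add_right le_rfl
          _ ≤ Wd μ q ξ δ F * ((s / u + 1 : ℝ≥0) : ℝ≥0∞) := mul_le_mul_left huU _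
          _ ≤ _ := key'
      rw [hStop]; exact le_top
  · have h4 := key (Wd ν q ξ' δ F').toNNReal (ENNReal.toNNReal_pos hV0 hVt)
      (by rw [ENNReal.coe_toNNReal hVt])
    rwa [ENNReal.coe_toNNReal hVt] at h4


lemma W0_prod_ge (q : ℝ) (μ : Measure X) [IsProbabilityMeasure μ]
    (ν : Measure X') [IsProbabilityMeasure ν]
    (ξ : Set X → ℝ≥0∞) (ξ' : Set X' → ℝ≥0∞)
    (hξ : IsPremeasure ξ) (hξ' : IsPremeasure ξ')
    (F : Set X) (F' : Set X') :
    W0 μ q ξ F * W0 ν q ξ' F' ≤ W0 (μ.prod ν) q (prodPre ξ ξ') (F ×ˢ F') := by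
  rw [W0, ENNReal.iSup_mul]
  refine iSup_le fun δ1 => ?_
  rw [ENNReal.iSup_mul]
  refine iSup_le fun hδ1 => ?_
  rw [W0, ENNReal.mul_iSup]
  refine iSup_le fun δ2 => ?_
  rw [ENNReal.mul_iSup]
  refine iSup_le fun hδ2 => ?_
  have hδ : 0 < min δ1 δ2 := lt_min hδ1 hδ2
  calc Wd μ q ξ δ1 F * Wd ν q ξ' δ2 F'
      ≤ Wd μ q ξ (min δ1 δ2) F * Wd ν q ξ' (min δ1 δ2) F' :=
        mul_le_mul' (Wd_anti (min_le_left _ _)) (Wd_anti (min_le_right _ _))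
    _ ≤ Wd (μ.prod ν) q (prodPre ξ ξ') (min δ1 δ2) (F ×ˢ F') :=
        Wd_prod_ge q μ ν ξ ξ' hξ hξ' hδ F F'
    _ ≤ W0 (μ.prod ν) q (prodPre ξ ξ') (F ×ˢ F') := by
        rw [W0]; exact le_iSup_of_le (min δ1 δ2) (le_iSup_of_le hδ le_rfl)

end Aux

section Thms

variable [MetricSpace X] [SeparableSpace X] [MeasurableSpace X] [BorelSpace X]
variable [MetricSpace X'] [SeparableSpace X'] [MeasurableSpace X'] [BorelSpace X']

theorem stmt14 (q : ℝ) (μ : Measure X) [IsProbabilityMeasure μ]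
    (ν : Measure X') [IsProbabilityMeasure ν]
    (ξ : Set X → ℝ≥0∞) (ξ' : Set X' → ℝ≥0∞)
    (hξ : IsPremeasure ξ) (hξ' : IsPremeasure ξ')
    (E : Set X) (E' : Set X') :
    WM μ q ξ E * WM ν q ξ' E' ≤ WM (μ.prod ν) q (prodPre ξ ξ') (E ×ˢ E') := by
  simp only [WM]
  rw [ENNReal.iSup_mul]
  refine iSup_le fun F => ?_
  rw [ENNReal.iSup_mul]
  refine iSup_le fun hF => ?_
  rw [ENNReal.mul_iSup]
  refine iSup_le fun F' => ?_
  rw [ENNReal.mul_iSup]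
  refine iSup_le fun hF' => ?_
  exact le_trans (W0_prod_ge q μ ν ξ ξ' hξ hξ' F F')
    (le_iSup₂_of_le (F ×ˢ F') (Set.prod_mono hF hF') le_rfl)

end Thms
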